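/- arXiv:1803.08471 — 4 statements merged into one kernel-verified Lean document; each statement's English description precedes it below -/
import Mathlib

section
/- Let α ∈ (0,1), let V be a positive integer, and let N be a positive integer. Let y, y' : Fin V → ℕ be two count vectors satisfying Σ_{v} |(y v : ℤ) - (y' v : ℤ)| ≤ N. Consider the geometric mechanism that outputs z ∈ ℤ^V with probability ∏_{v} 2Geo(z v - y v; α), i.e., adds independent two-sided geometric noise to each coordinate. Then for every subset S ⊆ (Fin V → ℤ), Σ_{z ∈ S} ∏_{v} 2Geo(z v - y v; α) ≤ exp(N · log(1/α)) · Σ_{z ∈ S} ∏_{v} 2Geo(z v - y' v; α). In other words, the geometric mechanism with parameter α is an (N, ε)-private randomized response method with ε = N · log(1/α). -/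
open scoped BigOperators

/-- The two-sided geometric pmf with parameter `α`: `2Geo(τ; α) = ((1-α)/(1+α)) · α^|τ|`. -/
noncomputable def twoGeoPMF (α : ℝ) (τ : ℤ) : ℝ := ((1 - α) / (1 + α)) * α ^ τ.natAbs

lemma twoGeoPMF_nonneg {α : ℝ} (hα0 : 0 < α) (hα1 : α < 1) (τ : ℤ) :
    0 ≤ twoGeoPMF α τ := by
  unfold twoGeoPMF
  have h : (0:ℝ) ≤ (1 - α) / (1 + α) := div_nonneg (by linarith) (by linarith)
  positivity

lemma twoGeoPMF_summable {α : ℝ} (hα0 : 0 < α) (hα1 : α < 1) :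
    Summable (twoGeoPMF α) := by
  apply Summable.of_nat_of_neg
  · simpa [twoGeoPMF] using (summable_geometric_of_lt_one hα0.le hα1).mul_left _
  · simpa [twoGeoPMF] using (summable_geometric_of_lt_one hα0.le hα1).mul_left _

lemma summable_pi_prod {α : ℝ} (hα0 : 0 < α) (hα1 : α < 1) :
    ∀ (n : ℕ) (c : Fin n → ℤ),
      Summable (fun z : Fin n → ℤ => ∏ v, twoGeoPMF α (z v - c v)) := by
  intro n
  induction n with
  | zero => intro c; simp; exact summable_of_finite_support (Set.toFinite _)
  | succ n ih =>
    intro c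
    have h0 : Summable (fun t : ℤ => twoGeoPMF α (t - c 0)) :=
      (twoGeoPMF_summable hα0 hα1).comp_injective (sub_left_injective)
    have h1 := ih (fun i => c i.succ)
    have hmul := Summable.mul_of_nonneg h0 h1
      (fun t => twoGeoPMF_nonneg hα0 hα1 _)
      (fun z => Finset.prod_nonneg fun v _ => twoGeoPMF_nonneg hα0 hα1 _)
    refine ((Fin.consEquiv (fun _ : Fin (n+1) => ℤ)).summable_iff).1 ?_
    convert hmul using 1
    ext p
    simp [Fin.prod_univ_succ, Fin.consEquiv]

lemma pointwise_bound {α : ℝ} (hα0 : 0 < α) (hα1 : α < 1) {V N : ℕ}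
    (y y' : Fin V → ℕ)
    (hdist : ∑ v : Fin V, |(y v : ℤ) - (y' v : ℤ)| ≤ (N : ℤ)) (z : Fin V → ℤ) :
    ∏ v, twoGeoPMF α (z v - (y v : ℤ)) ≤
      Real.exp ((N : ℝ) * Real.log (1 / α)) * ∏ v, twoGeoPMF α (z v - (y' v : ℤ)) := by
  have hexp : Real.exp ((N : ℝ) * Real.log (1 / α)) = (1 / α) ^ N := by
    rw [Real.exp_nat_mul, Real.exp_log (by positivity)]
  rw [hexp]
  have hcpos : (0:ℝ) < (1 - α) / (1 + α) := div_pos (by linarith) (by linarith)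
  have hA : ∀ (w : Fin V → ℕ), ∏ v, twoGeoPMF α (z v - (w v : ℤ))
      = ((1 - α) / (1 + α)) ^ V * α ^ (∑ v, (z v - (w v : ℤ)).natAbs) := by
    intro w
    simp only [twoGeoPMF]
    rw [Finset.prod_mul_distrib, Finset.prod_const, Finset.card_univ, Fintype.card_fin,
      Finset.prod_pow_eq_pow_sum]
  rw [hA y, hA y']
  set A := ∑ v, (z v - (y v : ℤ)).natAbs
  set B := ∑ v, (z v - (y' v : ℤ)).natAbs
  have hBA : B ≤ A + N := by
    have h1 : ∀ v : Fin V, (z v - (y' v : ℤ)).natAbs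
        ≤ (z v - (y v : ℤ)).natAbs + ((y v : ℤ) - (y' v : ℤ)).natAbs := by
      intro v
      have : z v - (y' v : ℤ) = (z v - (y v : ℤ)) + ((y v : ℤ) - (y' v : ℤ)) := by ring
      rw [this]; exact Int.natAbs_add_le _ _
    calc B ≤ ∑ v, ((z v - (y v : ℤ)).natAbs + ((y v : ℤ) - (y' v : ℤ)).natAbs) :=
          Finset.sum_le_sum fun v _ => h1 v
      _ = A + ∑ v, ((y v : ℤ) - (y' v : ℤ)).natAbs := by rw [Finset.sum_add_distrib]
      _ ≤ A + N := by
          have h5 : ((∑ v, ((y v : ℤ) - (y' v : ℤ)).natAbs : ℕ) : ℤ) ≤ (N : ℤ) := by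
            push_cast [Int.natCast_natAbs]
            exact hdist
          have h4 : (∑ v, ((y v : ℤ) - (y' v : ℤ)).natAbs) ≤ N := by exact_mod_cast h5
          omega
  have key : α ^ A ≤ (1 / α) ^ N * α ^ B := by
    have h2 : α ^ (A + N) ≤ α ^ B := pow_le_pow_of_le_one hα0.le hα1.le hBA
    rw [div_pow, one_pow, one_div, inv_mul_eq_div, le_div_iff₀ (by positivity), ← pow_add]
    exact h2
  calc ((1 - α) / (1 + α)) ^ V * α ^ A
      ≤ ((1 - α) / (1 + α)) ^ V * ((1 / α) ^ N * α ^ B) :=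
        mul_le_mul_of_nonneg_left key (by positivity)
    _ = (1 / α) ^ N * (((1 - α) / (1 + α)) ^ V * α ^ B) := by ring

/-- The geometric mechanism (adding independent two-sided geometric noise with parameter
`α ∈ (0,1)` to each coordinate of a count vector) is an `(N, ε)`-private randomized
response method with `ε = N · log(1/α)`. -/
theorem geometric_mechanism_limited_precision_local_privacy
    (α : ℝ) (hα0 : 0 < α) (hα1 : α < 1) (V : ℕ) (hV : 0 < V) (N : ℕ) (hN : 0 < N)
    (y y' : Fin V → ℕ)
    (hdist : ∑ v : Fin V, |(y v : ℤ) - (y' v : ℤ)| ≤ (N : ℤ))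
    (S : Set (Fin V → ℤ)) :
    ∑' z : S, ∏ v : Fin V, twoGeoPMF α ((z : Fin V → ℤ) v - (y v : ℤ)) ≤
      Real.exp ((N : ℝ) * Real.log (1 / α)) *
        ∑' z : S, ∏ v : Fin V, twoGeoPMF α ((z : Fin V → ℤ) v - (y' v : ℤ)) := by
  have h1 : Summable (fun z : S => ∏ v, twoGeoPMF α ((z : Fin V → ℤ) v - (y v : ℤ))) :=
    ((summable_pi_prod hα0 hα1 V fun v => (y v : ℤ)).subtype S)
  have h2 : Summable (fun z : S => ∏ v, twoGeoPMF α ((z : Fin V → ℤ) v - (y' v : ℤ))) :=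
    ((summable_pi_prod hα0 hα1 V fun v => (y' v : ℤ)).subtype S)
  rw [← tsum_mul_left]
  exact Summable.tsum_le_tsum (fun z => pointwise_bound hα0 hα1 y y' hdist z) h1 (h2.mul_left _)
end

section
/- Let α ∈ (0,1), let V be a positive integer, and let N be a positive integer. Let y, y' : Fin V → ℕ be two count vectors satisfying Σ_{v} |(y v : ℤ) - (y' v : ℤ)| ≤ N. Then for every output z : Fin V → ℤ, the likelihood ratio of the geometric mechanism is pointwise bounded: ∏_{v} 2Geo(z v - y v; α) ≤ α^{-N} · ∏_{v} 2Geo(z v - y' v; α). -/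
open scoped BigOperators

lemma twoGeoPMF_zpow (α : ℝ) (hα0 : 0 < α) (τ : ℤ) :
    twoGeoPMF α τ = ((1 - α) / (1 + α)) * α ^ (|τ| : ℤ) := by
  rw [twoGeoPMF, ← zpow_natCast, Int.natCast_natAbs]

lemma prod_zpow_eq {ι : Type*} (α : ℝ) (hα : α ≠ 0) {s : Finset ι} (f : ι → ℤ) :
    ∏ i ∈ s, α ^ (f i) = α ^ (∑ i ∈ s, f i) := by
  classical
  induction s using Finset.induction with
  | empty => simp
  | insert _ _ h ih => simp [Finset.prod_insert h, Finset.sum_insert h, zpow_add₀ hα, ih]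

/-- Pointwise likelihood-ratio bound for the geometric mechanism: for inputs `y, y'`
at ℓ₁-distance at most `N`, the probability of any output `z` under input `y` is at
most `α^{-N}` times its probability under input `y'`. -/
theorem geometric_mechanism_pointwise_likelihood_ratio
    (α : ℝ) (hα0 : 0 < α) (hα1 : α < 1) (V : ℕ) (hV : 0 < V) (N : ℕ) (hN : 0 < N)
    (y y' : Fin V → ℕ)
    (hdist : ∑ v : Fin V, |(y v : ℤ) - (y' v : ℤ)| ≤ (N : ℤ))
    (z : Fin V → ℤ) :
    ∏ v : Fin V, twoGeoPMF α (z v - (y v : ℤ)) ≤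
      α ^ (-(N : ℤ)) * ∏ v : Fin V, twoGeoPMF α (z v - (y' v : ℤ)) := by
  have hc : 0 ≤ (1 - α) / (1 + α) := div_nonneg (by linarith) (by linarith)
  have hα1' : α ≤ 1 := le_of_lt hα1
  -- coordinatewise bound
  have key : ∀ v : Fin V,
      twoGeoPMF α (z v - (y v : ℤ)) ≤
        α ^ (-(|(y v : ℤ) - (y' v : ℤ)|)) * twoGeoPMF α (z v - (y' v : ℤ)) := by
    intro v
    rw [twoGeoPMF_zpow α hα0, twoGeoPMF_zpow α hα0]
    rw [mul_left_comm, ← zpow_add₀ (ne_of_gt hα0)]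
    apply mul_le_mul_of_nonneg_left _ hc
    apply zpow_le_zpow_right_of_le_one₀ hα0 hα1'
    have := abs_sub_abs_le_abs_sub (z v - (y' v : ℤ)) ((y v : ℤ) - (y' v : ℤ))
    have h2 : z v - (y' v : ℤ) - ((y v : ℤ) - (y' v : ℤ)) = z v - (y v : ℤ) := by ring
    rw [h2] at this
    linarith
  calc ∏ v : Fin V, twoGeoPMF α (z v - (y v : ℤ))
      ≤ ∏ v : Fin V, (α ^ (-(|(y v : ℤ) - (y' v : ℤ)|)) * twoGeoPMF α (z v - (y' v : ℤ))) := by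
        apply Finset.prod_le_prod
        · intro v _
          rw [twoGeoPMF]
          exact mul_nonneg hc (pow_nonneg hα0.le _)
        · intro v _; exact key v
    _ = (∏ v : Fin V, α ^ (-(|(y v : ℤ) - (y' v : ℤ)|))) *
          ∏ v : Fin V, twoGeoPMF α (z v - (y' v : ℤ)) := Finset.prod_mul_distrib
    _ ≤ α ^ (-(N : ℤ)) * ∏ v : Fin V, twoGeoPMF α (z v - (y' v : ℤ)) := by
        apply mul_le_mul_of_nonneg_right
        · rw [prod_zpow_eq α (ne_of_gt hα0)]
          apply zpow_le_zpow_right_of_le_one₀ hα0 hα1'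
          have h3 : (∑ v : Fin V, -|(y v : ℤ) - (y' v : ℤ)|) = -∑ v : Fin V, |(y v : ℤ) - (y' v : ℤ)| := by
            rw [Finset.sum_neg_distrib]
          rw [h3]
          linarith
        · apply Finset.prod_nonneg
          intro v _
          rw [twoGeoPMF]
          exact mul_nonneg hc (pow_nonneg hα0.le _)
end

section
/- Let α ∈ (0,1) and set θ = (1-α)/α (so that the exponential distribution with rate θ has mean α/(1-α)). Then for every τ ∈ ℤ, the exponential mixture of the Skellam pmf equals the two-sided geometric pmf: ∫_0^∞ ∫_0^∞ θ·exp(-θ·λ₊) · θ·exp(-θ·λ₋) · Skel(τ; λ₊, λ₋) dλ₊ dλ₋ = ((1-α)/(1+α)) · α^{|τ|}. That is, a two-sided geometric random variable with parameter α can be generated by drawing λ₊ and λ₋ independently from an exponential distribution with mean α/(1-α) and then drawing τ from Skel(λ₊, λ₋). -/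
open scoped BigOperators
open MeasureTheory

/-- The Poisson pmf with rate `λ`: `Pois(k; λ) = exp(-λ) · λ^k / k!`. -/
noncomputable def poisPMF (lam : ℝ) (k : ℕ) : ℝ :=
  Real.exp (-lam) * lam ^ k / (Nat.factorial k)

/-- The Skellam pmf with rates `λ₁, λ₂`, the distribution of the difference of two
independent Poisson random variables:
`Skel(τ; λ₁, λ₂) = Σ_{m=0}^∞ Pois(m + τ⁺; λ₁) · Pois(m + τ⁻; λ₂)`. -/
noncomputable def skelPMF (lam₁ lam₂ : ℝ) (τ : ℤ) : ℝ :=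
  ∑' m : ℕ, poisPMF lam₁ (m + τ.toNat) * poisPMF lam₂ (m + (-τ).toNat)

lemma poisPMF_nonneg {lam : ℝ} (h : 0 ≤ lam) (k : ℕ) : 0 ≤ poisPMF lam k := by
  unfold poisPMF; positivity

lemma aux_integrable (k : ℕ) {b : ℝ} (hb : 0 < b) :
    IntegrableOn (fun x : ℝ => Real.exp (-(b * x)) * x ^ k) (Set.Ioi 0) := by
  have h := integrableOn_rpow_mul_exp_neg_mul_rpow (s := (k : ℝ)) (p := 1)
    (by exact_mod_cast lt_of_lt_of_le neg_one_lt_zero (Nat.cast_nonneg k)) zero_lt_one hb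
  refine h.congr_fun (fun x hx => ?_) measurableSet_Ioi
  dsimp only
  rw [Real.rpow_natCast, Real.rpow_one, mul_comm, neg_mul]

lemma aux_integral (k : ℕ) {b : ℝ} (hb : 0 < b) :
    ∫ x in Set.Ioi (0 : ℝ), Real.exp (-(b * x)) * x ^ k
      = (Nat.factorial k : ℝ) / b ^ (k + 1) := by
  have h := Real.integral_rpow_mul_exp_neg_mul_Ioi (a := (k : ℝ) + 1) (r := b)
    (by positivity) hb
  rw [show ((k : ℝ) + 1 - 1) = (k : ℝ) by ring] at h
  calc ∫ x in Set.Ioi (0 : ℝ), Real.exp (-(b * x)) * x ^ k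
      = ∫ x in Set.Ioi (0 : ℝ), x ^ ((k : ℝ)) * Real.exp (-(b * x)) := by
        refine setIntegral_congr_fun measurableSet_Ioi (fun x hx => ?_)
        rw [Real.rpow_natCast, mul_comm]
    _ = (1 / b) ^ ((k : ℝ) + 1) * Real.Gamma ((k : ℝ) + 1) := h
    _ = (Nat.factorial k : ℝ) / b ^ (k + 1) := by
        rw [Real.Gamma_nat_eq_factorial,
          show ((k : ℝ) + 1) = ((k + 1 : ℕ) : ℝ) by push_cast; ring,
          Real.rpow_natCast, div_pow, one_pow]
        ring

lemma expPois_integrable (α : ℝ) (hα0 : 0 < α) (hα1 : α < 1) (k : ℕ) :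
    IntegrableOn
      (fun lam : ℝ => (1 - α) / α * Real.exp (-((1 - α) / α) * lam) * poisPMF lam k)
      (Set.Ioi 0) := by
  set θ := (1 - α) / α with hθdef
  have hθ : 0 < θ := div_pos (by linarith) hα0
  have hb : 0 < θ + 1 := by linarith
  have h : IntegrableOn
      (fun lam : ℝ => (θ / (Nat.factorial k : ℝ)) * (Real.exp (-((θ + 1) * lam)) * lam ^ k))
      (Set.Ioi 0) := (aux_integrable k hb).const_mul _
  refine h.congr_fun (fun lam _ => ?_) measurableSet_Ioi
  unfold poisPMF
  dsimp only
  rw [show -((θ + 1) * lam) = -θ * lam + -lam by ring, Real.exp_add]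
  have : (Nat.factorial k : ℝ) ≠ 0 := by positivity
  field_simp

lemma expPois_integral (α : ℝ) (hα0 : 0 < α) (hα1 : α < 1) (k : ℕ) :
    ∫ lam in Set.Ioi (0 : ℝ),
        (1 - α) / α * Real.exp (-((1 - α) / α) * lam) * poisPMF lam k
      = (1 - α) * α ^ k := by
  set θ := (1 - α) / α with hθdef
  have hθ : 0 < θ := div_pos (by linarith) hα0
  have hb : 0 < θ + 1 := by linarith
  have hfac : (Nat.factorial k : ℝ) ≠ 0 := by positivity
  calc ∫ lam in Set.Ioi (0 : ℝ), θ * Real.exp (-θ * lam) * poisPMF lam k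
      = ∫ lam in Set.Ioi (0 : ℝ),
          (θ / (Nat.factorial k : ℝ)) * (Real.exp (-((θ + 1) * lam)) * lam ^ k) := by
        refine setIntegral_congr_fun measurableSet_Ioi (fun lam _ => ?_)
        unfold poisPMF
        rw [show -((θ + 1) * lam) = -θ * lam + -lam by ring, Real.exp_add]
        field_simp
    _ = (θ / (Nat.factorial k : ℝ)) * ((Nat.factorial k : ℝ) / (θ + 1) ^ (k + 1)) := by
        rw [integral_const_mul, aux_integral k hb]
    _ = (1 - α) * α ^ k := by
        have hθ1 : θ + 1 = 1 / α := by
          rw [hθdef]; field_simp; ring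
        rw [hθ1, div_pow, one_pow, hθdef]
        field_simp
        ring

/-- A two-sided geometric random variable with parameter `α` can be generated by drawing
`λ₊, λ₋` independently from an exponential distribution with rate `θ = (1-α)/α`
(mean `α/(1-α)`) and then drawing `τ ~ Skel(λ₊, λ₋)`. -/
theorem twoSidedGeometric_as_exponential_mixture_of_skellam
    (α : ℝ) (hα0 : 0 < α) (hα1 : α < 1) (θ : ℝ) (hθ : θ = (1 - α) / α) (τ : ℤ) :
    ∫ lamp in Set.Ioi (0 : ℝ), ∫ lamm in Set.Ioi (0 : ℝ),
        θ * Real.exp (-θ * lamp) * (θ * Real.exp (-θ * lamm)) * skelPMF lamp lamm τ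
      = twoGeoPMF α τ := by
  subst hθ
  set θ := (1 - α) / α with hθdef
  have hθ0 : 0 < θ := div_pos (by linarith) hα0
  set p := τ.toNat with hp
  set q := (-τ).toNat with hq
  have hα0' : (0:ℝ) ≤ α := hα0.le
  have hαle : ∀ j : ℕ, (1 - α) * α ^ j ≤ 1 := by
    intro j
    have h1 : α ^ j ≤ 1 := pow_le_one₀ hα0' hα1.le
    nlinarith [pow_nonneg hα0' j]
  have hαnn : ∀ j : ℕ, 0 ≤ (1 - α) * α ^ j := by
    intro j; have := pow_nonneg hα0' j; nlinarith
  -- summability of shifted Poisson pmf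
  have hpois_sum : ∀ lamp : ℝ, Summable fun m : ℕ => poisPMF lamp (m + p) := by
    intro lamp
    have h1 : Summable (fun m : ℕ => lamp ^ (m + p) / (Nat.factorial (m + p))) :=
      (Real.summable_pow_div_factorial lamp).comp_injective (add_left_injective p)
    have h2 := h1.mul_left (Real.exp (-lamp))
    refine h2.congr fun m => ?_
    unfold poisPMF; ring
  -- Step 1: the inner integral
  have inner : ∀ lamp : ℝ, 0 ≤ lamp →
      (∫ lamm in Set.Ioi (0 : ℝ),
          θ * Real.exp (-θ * lamp) * (θ * Real.exp (-θ * lamm)) * skelPMF lamp lamm τ)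
        = ∑' m : ℕ, (θ * Real.exp (-θ * lamp) * poisPMF lamp (m + p))
            * ((1 - α) * α ^ (m + q)) := by
    intro lamp hlamp
    set c : ℝ := θ * Real.exp (-θ * lamp) with hc
    have hc0 : 0 < c := by positivity
    set F : ℕ → ℝ → ℝ := fun m lamm =>
      poisPMF lamp (m + p) * (θ * Real.exp (-θ * lamm) * poisPMF lamm (m + q)) with hF
    have hFint : ∀ m : ℕ, Integrable (F m) (volume.restrict (Set.Ioi 0)) := fun m =>
      (expPois_integrable α hα0 hα1 (m + q)).const_mul _
    have hFval : ∀ m : ℕ, (∫ lamm in Set.Ioi (0:ℝ), F m lamm)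
        = poisPMF lamp (m + p) * ((1 - α) * α ^ (m + q)) := by
      intro m
      rw [hF]
      rw [integral_const_mul]
      rw [← hθdef] at *
      rw [expPois_integral α hα0 hα1 (m + q)]
    have hFnorm : ∀ m : ℕ, (∫ lamm in Set.Ioi (0:ℝ), ‖F m lamm‖)
        = poisPMF lamp (m + p) * ((1 - α) * α ^ (m + q)) := by
      intro m
      rw [← hFval m]
      refine setIntegral_congr_fun measurableSet_Ioi (fun x hx => ?_)
      have h1 := poisPMF_nonneg hlamp (m + p)
      have h2 := poisPMF_nonneg (le_of_lt hx) (m + q)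
      rw [hF]
      exact Real.norm_of_nonneg (by positivity)
    have hFsum : Summable fun m : ℕ => ∫ lamm in Set.Ioi (0:ℝ), ‖F m lamm‖ := by
      simp_rw [hFnorm]
      refine Summable.of_nonneg_of_le (fun m => ?_) (fun m => ?_) (hpois_sum lamp)
      · exact mul_nonneg (poisPMF_nonneg hlamp _) (hαnn _)
      · exact mul_le_of_le_one_right (poisPMF_nonneg hlamp _) (hαle _)
    have hswap := integral_tsum_of_summable_integral_norm hFint hFsum
    have hpt : ∀ lamm : ℝ,
        θ * Real.exp (-θ * lamp) * (θ * Real.exp (-θ * lamm)) * skelPMF lamp lamm τ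
          = c * ∑' m : ℕ, F m lamm := by
      intro lamm
      rw [skelPMF, ← tsum_mul_left, ← tsum_mul_left]
      refine tsum_congr fun m => ?_
      rw [hF, hc]; ring
    calc (∫ lamm in Set.Ioi (0 : ℝ),
          θ * Real.exp (-θ * lamp) * (θ * Real.exp (-θ * lamm)) * skelPMF lamp lamm τ)
        = ∫ lamm in Set.Ioi (0 : ℝ), c * ∑' m : ℕ, F m lamm := by
          exact setIntegral_congr_fun measurableSet_Ioi fun lamm _ => hpt lamm
      _ = c * ∫ lamm in Set.Ioi (0 : ℝ), ∑' m : ℕ, F m lamm := integral_const_mul _ _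
      _ = c * ∑' m : ℕ, ∫ lamm in Set.Ioi (0 : ℝ), F m lamm := by rw [← hswap]
      _ = ∑' m : ℕ, (c * poisPMF lamp (m + p)) * ((1 - α) * α ^ (m + q)) := by
          rw [← tsum_mul_left]
          exact tsum_congr fun m => by rw [hFval m]; ring
  -- Step 2: the outer integral
  set G : ℕ → ℝ → ℝ := fun m lamp =>
    ((1 - α) * α ^ (m + q)) * (θ * Real.exp (-θ * lamp) * poisPMF lamp (m + p)) with hG
  have hGint : ∀ m : ℕ, Integrable (G m) (volume.restrict (Set.Ioi 0)) := fun m =>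
    (expPois_integrable α hα0 hα1 (m + p)).const_mul _
  have hGval : ∀ m : ℕ, (∫ lamp in Set.Ioi (0:ℝ), G m lamp)
      = ((1 - α) * α ^ (m + q)) * ((1 - α) * α ^ (m + p)) := by
    intro m
    rw [hG, integral_const_mul]
    rw [← hθdef] at *
    rw [expPois_integral α hα0 hα1 (m + p)]
  have hGnorm : ∀ m : ℕ, (∫ lamp in Set.Ioi (0:ℝ), ‖G m lamp‖)
      = ((1 - α) * α ^ (m + q)) * ((1 - α) * α ^ (m + p)) := by
    intro m
    rw [← hGval m]
    refine setIntegral_congr_fun measurableSet_Ioi (fun x hx => ?_)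
    have h1 := poisPMF_nonneg (le_of_lt hx) (m + p)
    have h2 := hαnn (m + q)
    rw [hG]
    exact Real.norm_of_nonneg (by positivity)
  have hgeo : Summable fun m : ℕ => (α ^ 2) ^ m :=
    summable_geometric_of_lt_one (by positivity) (by nlinarith)
  have hGsum : Summable fun m : ℕ => ∫ lamp in Set.Ioi (0:ℝ), ‖G m lamp‖ := by
    simp_rw [hGnorm]
    have := (hgeo.mul_left ((1 - α) ^ 2 * α ^ (p + q)))
    refine this.congr fun m => ?_
    ring
  have hswap := integral_tsum_of_summable_integral_norm hGint hGsum
  have hpq : p + q = τ.natAbs := by rw [hp, hq]; omega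
  calc (∫ lamp in Set.Ioi (0 : ℝ), ∫ lamm in Set.Ioi (0 : ℝ),
        θ * Real.exp (-θ * lamp) * (θ * Real.exp (-θ * lamm)) * skelPMF lamp lamm τ)
      = ∫ lamp in Set.Ioi (0 : ℝ), ∑' m : ℕ, G m lamp := by
        refine setIntegral_congr_fun measurableSet_Ioi fun lamp hlamp => ?_
        rw [inner lamp (le_of_lt hlamp)]
        exact tsum_congr fun m => by rw [hG]; ring
    _ = ∑' m : ℕ, ∫ lamp in Set.Ioi (0 : ℝ), G m lamp := by rw [← hswap]
    _ = ∑' m : ℕ, ((1 - α) ^ 2 * α ^ (p + q)) * (α ^ 2) ^ m := by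
        exact tsum_congr fun m => by rw [hGval m]; ring
    _ = ((1 - α) ^ 2 * α ^ (p + q)) * (1 - α ^ 2)⁻¹ := by
        rw [tsum_mul_left, tsum_geometric_of_lt_one (by positivity) (by nlinarith)]
    _ = twoGeoPMF α τ := by
        rw [twoGeoPMF, ← hpq]
        have h1 : 1 - α ^ 2 ≠ 0 := by nlinarith
        have h2 : 1 + α ≠ 0 := by linarith
        field_simp
        ring
end

section
/- Let λ₁, λ₂ > 0, let τ ∈ ℤ, and let m ∈ ℕ. Consider two independent Poisson random variables y₁ ~ Pois(λ₁) and y₂ ~ Pois(λ₂). The joint probability that their difference equals τ and their minimum equals m, namely Pois(m + max(τ,0); λ₁) · Pois(m + max(-τ,0); λ₂), factorizes as the product of the Skellam pmf and the Bessel pmf: Pois(m + max(τ,0); λ₁) · Pois(m + max(-τ,0); λ₂) = Skel(τ; λ₁, λ₂) · Bes(m; |τ|, λ₁·λ₂). Consequently, the difference y₁ - y₂ is marginally Skellam(λ₁, λ₂) and, conditioned on y₁ - y₂ = τ, the minimum min(y₁, y₂) has the Bessel distribution with order |τ| and parameter λ₁·λ₂ (i.e., scale 2√(λ₁λ₂)).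 -/
/-- The Bessel pmf with integer order `ν` and parameter `c`:
`Bes(m; ν, c) = (c^m / (m!·(m+ν)!)) / (Σ_{m'} c^{m'} / (m'!·(m'+ν)!))`. -/
noncomputable def besPMF (ν : ℕ) (c : ℝ) (m : ℕ) : ℝ :=
  (c ^ m / (Nat.factorial m * Nat.factorial (m + ν))) /
    ∑' m' : ℕ, c ^ m' / (Nat.factorial m' * Nat.factorial (m' + ν))

lemma key_factor (lam₁ lam₂ : ℝ) (τ : ℤ) (m : ℕ) :
    poisPMF lam₁ (m + τ.toNat) * poisPMF lam₂ (m + (-τ).toNat)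
      = (Real.exp (-lam₁) * lam₁ ^ τ.toNat * (Real.exp (-lam₂) * lam₂ ^ (-τ).toNat))
        * ((lam₁ * lam₂) ^ m /
            (Nat.factorial m * Nat.factorial (m + τ.natAbs))) := by
  rcases le_or_gt 0 τ with h | h
  · have ha : (-τ).toNat = 0 := by omega
    have hb : τ.natAbs = τ.toNat := by omega
    simp only [poisPMF, ha, hb, add_zero, pow_zero, mul_one, pow_add, mul_pow]
    ring
  · have ha : τ.toNat = 0 := by omega
    have hb : τ.natAbs = (-τ).toNat := by omega
    simp only [poisPMF, ha, hb, add_zero, pow_zero, mul_one, pow_add, mul_pow]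
    ring

lemma bes_summable (c : ℝ) (hc : 0 ≤ c) (ν : ℕ) :
    Summable (fun m : ℕ => c ^ m / (Nat.factorial m * Nat.factorial (m + ν))) := by
  apply Summable.of_nonneg_of_le
    (fun m => by positivity)
    (fun m => ?_)
    (Real.summable_pow_div_factorial c)
  have h1 : (1 : ℝ) ≤ (Nat.factorial (m + ν) : ℝ) := by
    exact_mod_cast Nat.one_le_iff_ne_zero.mpr (Nat.factorial_ne_zero _)
  calc c ^ m / (Nat.factorial m * Nat.factorial (m + ν))
      ≤ c ^ m / (Nat.factorial m * 1) := by
        apply div_le_div_of_nonneg_left (by positivity)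
          (by positivity)
        have : (0:ℝ) < Nat.factorial m := by positivity
        nlinarith
    _ = c ^ m / Nat.factorial m := by rw [mul_one]

/-- For two independent Poisson variables `y₁ ~ Pois(λ₁)`, `y₂ ~ Pois(λ₂)`, the joint
probability that their difference is `τ` and their minimum is `m` factorizes as the
Skellam pmf of `τ` times the Bessel pmf of `m` with order `|τ|` and parameter `λ₁·λ₂`:
the difference is marginally Skellam and, conditioned on the difference, the minimum
is Bessel distributed. -/
theorem poisson_difference_minimum_skellam_bessel_factorization
    (lam₁ lam₂ : ℝ) (h₁ : 0 < lam₁) (h₂ : 0 < lam₂) (τ : ℤ) (m : ℕ) :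
    poisPMF lam₁ (m + τ.toNat) * poisPMF lam₂ (m + (-τ).toNat)
      = skelPMF lam₁ lam₂ τ * besPMF τ.natAbs (lam₁ * lam₂) m := by
  set c := lam₁ * lam₂ with hc
  set ν := τ.natAbs
  set f : ℕ → ℝ := fun m => c ^ m / (Nat.factorial m * Nat.factorial (m + ν)) with hf
  set K := Real.exp (-lam₁) * lam₁ ^ τ.toNat * (Real.exp (-lam₂) * lam₂ ^ (-τ).toNat)
    with hK
  have hcpos : 0 < c := mul_pos h₁ h₂
  have hsum : Summable f := bes_summable c hcpos.le ν
  have hTpos : 0 < ∑' m', f m' := by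
    apply Summable.tsum_pos hsum (fun i => by positivity) 0
    simp only [hf, pow_zero, Nat.factorial_zero, Nat.cast_one, one_mul, zero_add]
    positivity
  have hskel : skelPMF lam₁ lam₂ τ = K * ∑' m', f m' := by
    rw [skelPMF]
    rw [← tsum_mul_left]
    exact tsum_congr fun m' => key_factor lam₁ lam₂ τ m'
  have hbes : besPMF ν c m = f m / ∑' m', f m' := rfl
  have hcancel : (K * ∑' m', f m') * (f m / ∑' m', f m') = K * f m := by
    rw [mul_assoc, mul_div_assoc', mul_comm (∑' m', f m') (f m), mul_div_assoc,
      div_self hTpos.ne', mul_one]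
  rw [key_factor lam₁ lam₂ τ m, hskel, hbes, hcancel, hf]
end
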